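/- Let L be a real normed vector space semiordered by a cone K such that the norm is monotone (‖u‖ ≤ ‖u+v‖ for all u, v ∈ K). Then for every v ∈ K there exists a continuous linear functional ν : L → ℝ that is nonnegative on K, has norm ‖ν‖ = 1, and satisfies ν(v) = ‖v‖. -/

import Mathlib

/-- In a positive space (normed space semiordered by a cone with monotone norm), every
nonzero positive vector `v` admits a positive continuous linear functional of norm one
attaining `ν(v) = ‖v‖`. -/
theorem stmt_10 {L : Type*} [NormedAddCommGroup L] [NormedSpace ℝ L]
    (K : Set L)
    (hconv : Convex ℝ K)
    (hsmul : ∀ (t : ℝ), 0 ≤ t → ∀ v ∈ K, t • v ∈ K)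
    (hanti : ∀ v : L, v ∈ K → -v ∈ K → v = 0)
    (hmono : ∀ u ∈ K, ∀ v ∈ K, ‖u‖ ≤ ‖u + v‖)
    (v : L) (hv : v ∈ K) (hv0 : v ≠ 0) :
    ∃ ν : L →L[ℝ] ℝ, (∀ u ∈ K, 0 ≤ ν u) ∧ ‖ν‖ = 1 ∧ ν v = ‖v‖ := by
  have hvnorm : (0:ℝ) < ‖v‖ := norm_pos_iff.mpr hv0
  set B : Set L := Metric.ball (0:L) ‖v‖ with hB
  set T : Set L := (fun k => v + k) '' K with hT
  have hBconv : Convex ℝ B := convex_ball 0 ‖v‖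
  have hBopen : IsOpen B := Metric.isOpen_ball
  have hTconv : Convex ℝ T := by
    have := hconv.translate v
    simpa [hT] using this
  have hdisj : Disjoint B T := by
    rw [Set.disjoint_left]
    rintro x hxB ⟨k, hk, rfl⟩
    have h1 : ‖v + k‖ < ‖v‖ := by simpa [hB, dist_eq_norm] using hxB
    have h2 := hmono v hv k hk
    linarith
  obtain ⟨f, s, hfB, hfT⟩ := geometric_hahn_banach_open hBconv hBopen hTconv hdisj
  have h0B : (0:L) ∈ B := by simp [hB, hvnorm]
  have hs0 : (0:ℝ) < s := by
    have := hfB 0 h0B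
    simpa using this
  have hfv : s ≤ f v := by
    have : v + 0 ∈ T := ⟨0, by
      simpa using hsmul 0 le_rfl v hv⟩
    simpa using hfT _ this
  -- positivity on K
  have hKpos : ∀ u ∈ K, 0 ≤ f u := by
    intro u hu
    by_contra h
    push_neg at h
    set t : ℝ := (f v - s + 1) / (-f u) with ht
    have htpos : 0 < t := by
      apply div_pos
      · linarith
      · linarith
    have hmem : v + t • u ∈ T := ⟨t • u, hsmul t htpos.le u hu, rfl⟩
    have := hfT _ hmem
    rw [map_add, map_smul] at this
    have hune : f u ≠ 0 := ne_of_lt h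
    have htu : t * f u = -(f v - s + 1) := by
      rw [ht, div_mul_eq_mul_div, div_neg, mul_div_assoc, div_self hune, mul_one]
    simp only [smul_eq_mul] at this
    rw [htu] at this
    linarith
  -- f ≤ s on closed ball of radius ‖v‖
  have hub : ∀ x : L, ‖x‖ ≤ ‖v‖ → f x ≤ s := by
    intro x hx
    by_contra h
    push_neg at h
    have hfx : 0 < f x := lt_trans hs0 h
    set r : ℝ := (s / f x + 1) / 2 with hr
    have hr0 : 0 ≤ r := by
      have : 0 ≤ s / f x := div_nonneg hs0.le hfx.le
      positivity
    have hr1 : r < 1 := by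
      have : s / f x < 1 := (div_lt_one hfx).mpr h
      rw [hr]; linarith
    have hmem : r • x ∈ B := by
      simp only [hB, Metric.mem_ball, dist_zero_right, norm_smul, Real.norm_eq_abs,
        abs_of_nonneg hr0]
      calc r * ‖x‖ ≤ r * ‖v‖ := by nlinarith
        _ < 1 * ‖v‖ := by nlinarith
        _ = ‖v‖ := one_mul _
    have := hfB _ hmem
    rw [map_smul, smul_eq_mul] at this
    have hrfx : r * f x = (s + f x) / 2 := by
      rw [hr]; field_simp
    rw [hrfx] at this
    linarith
  -- operator norm bound
  have hbound : ‖f‖ ≤ s / ‖v‖ := by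
    apply ContinuousLinearMap.opNorm_le_bound f (div_nonneg hs0.le hvnorm.le)
    intro x
    rcases eq_or_ne x 0 with rfl | hx0
    · simp
    · have hxn : (0:ℝ) < ‖x‖ := norm_pos_iff.mpr hx0
      set u : L := (‖v‖ / ‖x‖) • x with hu
      have hun : ‖u‖ = ‖v‖ := by
        rw [hu, norm_smul, Real.norm_eq_abs, abs_of_nonneg (by positivity)]
        field_simp
      have h1 : f u ≤ s := hub u hun.le
      have h2 : f (-u) ≤ s := hub (-u) (by rw [norm_neg, hun])
      rw [map_neg] at h2
      have hfu : f u = (‖v‖ / ‖x‖) * f x := by rw [hu, map_smul, smul_eq_mul]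
      have habs : |f u| ≤ s := abs_le.mpr ⟨by linarith, h1⟩
      rw [hfu, abs_mul, abs_of_nonneg (by positivity : (0:ℝ) ≤ ‖v‖ / ‖x‖)] at habs
      rw [Real.norm_eq_abs, div_mul_eq_mul_div, le_div_iff₀ hvnorm]
      rw [div_mul_eq_mul_div, div_le_iff₀ hxn] at habs
      nlinarith
  have hfvle : f v ≤ s := by
    calc f v ≤ |f v| := le_abs_self _
      _ = ‖f v‖ := rfl
      _ ≤ ‖f‖ * ‖v‖ := f.le_opNorm v
      _ ≤ (s / ‖v‖) * ‖v‖ := by nlinarith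
      _ = s := by field_simp
  have hfveq : f v = s := le_antisymm hfvle hfv
  have hnormf : ‖f‖ = s / ‖v‖ := by
    refine le_antisymm hbound ?_
    rw [div_le_iff₀ hvnorm]
    calc s = f v := hfveq.symm
      _ ≤ ‖f v‖ := le_abs_self _
      _ ≤ ‖f‖ * ‖v‖ := f.le_opNorm v
  have hfne : ‖f‖ ≠ 0 := by
    rw [hnormf]; positivity
  refine ⟨‖f‖⁻¹ • f, ?_, ?_, ?_⟩
  · intro u hu
    simp only [ContinuousLinearMap.coe_smul', Pi.smul_apply, smul_eq_mul]
    exact mul_nonneg (inv_nonneg.mpr (norm_nonneg _)) (hKpos u hu)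
  · have hns := norm_smul (α := ℝ) (β := L →L[ℝ] ℝ) ‖f‖⁻¹ f
    rw [hns, Real.norm_eq_abs, abs_of_nonneg (inv_nonneg.mpr (norm_nonneg f)),
      inv_mul_cancel₀ hfne]
  · simp only [ContinuousLinearMap.coe_smul', Pi.smul_apply, smul_eq_mul]
    rw [hfveq, hnormf]
    field_simp
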